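/- arXiv:2005.04590 — 2 statements merged into one kernel-verified Lean document; each statement's English description precedes it below -/
import Mathlib

section
/- Let X and Y be A-bounded operators on H admitting A-adjoints Xs and Ys (i.e. A∘Xs = X*∘A and A∘Ys = Y*∘A). Then w_𝔸([[0,X],[Y,0]])² ≤ (1/4)·max{‖Xs∘X + Y∘Ys‖_A, ‖X∘Xs + Ys∘Y‖_A} + (1/2)·max{w_A(X∘Y), w_A(Y∘X)}. -/
noncomputable def sInner {E : Type*} [NormedAddCommGroup E] [InnerProductSpace ℂ E]
    (A : E →L[ℂ] E) (x y : E) : ℂ := inner ℂ (A x) y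

noncomputable def sNorm {E : Type*} [NormedAddCommGroup E] [InnerProductSpace ℂ E]
    (A : E →L[ℂ] E) (x : E) : ℝ := Real.sqrt (sInner A x x).re

/-- The `A`-operator seminorm. -/
noncomputable def opSNorm {E : Type*} [NormedAddCommGroup E] [InnerProductSpace ℂ E]
    (A T : E →L[ℂ] E) : ℝ := sSup {c | ∃ x : E, sNorm A x = 1 ∧ c = sNorm A (T x)}

/-- The `A`-numerical radius. -/
noncomputable def numRad {E : Type*} [NormedAddCommGroup E] [InnerProductSpace ℂ E]
    (A T : E →L[ℂ] E) : ℝ := sSup {c | ∃ x : E, sNorm A x = 1 ∧ c = ‖sInner A (T x) x‖}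

/-- `T` is `A`-bounded. -/
def ABounded {E : Type*} [NormedAddCommGroup E] [InnerProductSpace ℂ E]
    (A T : E →L[ℂ] E) : Prop := ∃ c > 0, ∀ x : E, sNorm A (T x) ≤ c * sNorm A x

/-- The 2×2 block operator `[[T, X], [Y, S]]` on `H ⊕ H` (with the ℓ² product structure). -/
noncomputable def blk {H : Type*} [NormedAddCommGroup H] [InnerProductSpace ℂ H]
    (T X Y S : H →L[ℂ] H) : WithLp 2 (H × H) →L[ℂ] WithLp 2 (H × H) :=
  ((WithLp.prodContinuousLinearEquiv 2 ℂ H H).symm.toContinuousLinearMap.comp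
    (((T.coprod X).prod (Y.coprod S)).comp
      (WithLp.prodContinuousLinearEquiv 2 ℂ H H).toContinuousLinearMap))

/-- The diagonal operator `𝔸 = diag(A, A)` on `H ⊕ H`. -/
noncomputable def twoA {H : Type*} [NormedAddCommGroup H] [InnerProductSpace ℂ H]
    (A : H →L[ℂ] H) : WithLp 2 (H × H) →L[ℂ] WithLp 2 (H × H) := blk A 0 0 A

section Helpers

open ContinuousLinearMap

variable {E : Type*} [NormedAddCommGroup E] [InnerProductSpace ℂ E] [CompleteSpace E]

lemma exists_sqrtOp (A : E →L[ℂ] E) (hA : A.IsPositive) :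
    ∃ g : E →L[ℂ] E, IsSelfAdjoint g ∧ g.comp g = A := by
  have h0 : (0 : E →L[ℂ] E) ≤ A := (ContinuousLinearMap.nonneg_iff_isPositive A).mpr hA
  exact ⟨CFC.sqrt A, IsSelfAdjoint.of_nonneg (CFC.sqrt_nonneg (a := A)),
    CFC.sqrt_mul_sqrt_self A h0⟩

variable {A g : E →L[ℂ] E}

lemma sInner_eq_inner (hsa : IsSelfAdjoint g) (hgg : g.comp g = A) (x y : E) :
    sInner A x y = inner ℂ (g x) (g y) := by
  have h := (ContinuousLinearMap.isSelfAdjoint_iff_isSymmetric.mp hsa) (g x) y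
  calc sInner A x y = inner ℂ (g (g x)) y := by rw [sInner, ← hgg]; rfl
  _ = inner ℂ (g x) (g y) := h

lemma sNorm_eq_norm (hsa : IsSelfAdjoint g) (hgg : g.comp g = A) (x : E) :
    sNorm A x = ‖g x‖ := by
  rw [sNorm, sInner_eq_inner hsa hgg]
  exact (norm_eq_sqrt_re_inner (𝕜 := ℂ) (g x)).symm

lemma sNorm_nonneg' (A : E →L[ℂ] E) (x : E) : 0 ≤ sNorm A x := Real.sqrt_nonneg _

lemma inner_self_re (x : E) : (inner ℂ x x : ℂ).re = ‖x‖ ^ 2 := by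
  have := @inner_self_eq_norm_sq ℂ _ _ _ _ x
  simpa using this

lemma cre_le_norm (z : ℂ) : z.re ≤ ‖z‖ := by
  simpa using RCLike.re_le_norm (K := ℂ) z

lemma inner_re_symm' (x y : E) : (inner ℂ x y : ℂ).re = (inner ℂ y x : ℂ).re := by
  have := @inner_re_symm ℂ _ _ _ _ x y
  simpa using this

lemma sNorm_smul (hsa : IsSelfAdjoint g) (hgg : g.comp g = A) (c : ℂ) (x : E) :
    sNorm A (c • x) = ‖c‖ * sNorm A x := by
  rw [sNorm_eq_norm hsa hgg, sNorm_eq_norm hsa hgg, map_smul, norm_smul]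

lemma norm_sInner_le (hsa : IsSelfAdjoint g) (hgg : g.comp g = A) (x y : E) :
    ‖sInner A x y‖ ≤ sNorm A x * sNorm A y := by
  rw [sInner_eq_inner hsa hgg, sNorm_eq_norm hsa hgg, sNorm_eq_norm hsa hgg]
  exact norm_inner_le_norm _ _

lemma opSNorm_nonneg (A T : E →L[ℂ] E) : 0 ≤ opSNorm A T := by
  apply Real.sSup_nonneg
  rintro c ⟨x, -, rfl⟩
  exact Real.sqrt_nonneg _

lemma numRad_nonneg (A T : E →L[ℂ] E) : 0 ≤ numRad A T := by
  apply Real.sSup_nonneg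
  rintro c ⟨x, -, rfl⟩
  exact norm_nonneg _

lemma apply_le_opSNorm (hsa : IsSelfAdjoint g) (hgg : g.comp g = A)
    {T : E →L[ℂ] E} (hT : ABounded A T) (x : E) :
    sNorm A (T x) ≤ opSNorm A T * sNorm A x := by
  obtain ⟨c, hc, hbd⟩ := hT
  rcases eq_or_lt_of_le (sNorm_nonneg' A x) with h | ht
  · have h1 : sNorm A (T x) ≤ 0 := by
      have := hbd x; rw [← h] at this; simpa using this
    have h2 : 0 ≤ opSNorm A T * sNorm A x :=
      mul_nonneg (opSNorm_nonneg A T) (sNorm_nonneg' A x)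
    exact h1.trans h2
  · set t := sNorm A x with htdef
    have hu : sNorm A ((((t⁻¹ : ℝ) : ℂ)) • x) = 1 := by
      rw [sNorm_smul hsa hgg, Complex.norm_real, Real.norm_eq_abs,
        abs_of_pos (inv_pos.mpr ht)]
      exact inv_mul_cancel₀ (ne_of_gt ht)
    have hbdd : BddAbove {c | ∃ x : E, sNorm A x = 1 ∧ c = sNorm A (T x)} := by
      refine ⟨c, ?_⟩
      rintro r ⟨u, hu1, rfl⟩
      have := hbd u; rw [hu1] at this; simpa using this
    have hle := le_csSup hbdd ⟨_, hu, rfl⟩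
    rw [map_smul, sNorm_smul hsa hgg, Complex.norm_real, Real.norm_eq_abs,
      abs_of_pos (inv_pos.mpr ht)] at hle
    have hne : t ≠ 0 := ne_of_gt ht
    calc sNorm A (T x) = (t⁻¹ * sNorm A (T x)) * t := by
          rw [mul_comm t⁻¹, mul_assoc, inv_mul_cancel₀ hne, mul_one]
    _ ≤ sSup {c | ∃ x : E, sNorm A x = 1 ∧ c = sNorm A (T x)} * t :=
        mul_le_mul_of_nonneg_right hle ht.le
    _ = opSNorm A T * t := rfl

lemma sInner_smul_smul (A : E →L[ℂ] E) (c : ℂ) (u v : E) :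
    sInner A (c • u) (c • v) = (starRingEnd ℂ) c * (c * sInner A u v) := by
  simp only [sInner, map_smul, inner_smul_left, inner_smul_right]
  ring

lemma sInner_apply_le_numRad (hsa : IsSelfAdjoint g) (hgg : g.comp g = A)
    {T : E →L[ℂ] E} (hT : ABounded A T) (x : E) :
    ‖sInner A (T x) x‖ ≤ numRad A T * (sNorm A x) ^ 2 := by
  obtain ⟨c, hc, hbd⟩ := hT
  rcases eq_or_lt_of_le (sNorm_nonneg' A x) with h | ht
  · have h1 : ‖sInner A (T x) x‖ ≤ 0 := by
      have := norm_sInner_le hsa hgg (T x) x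
      rw [← h, mul_zero] at this; exact this
    have h2 : 0 ≤ numRad A T * (sNorm A x) ^ 2 :=
      mul_nonneg (numRad_nonneg A T) (sq_nonneg _)
    exact h1.trans h2
  · set t := sNorm A x with htdef
    have hu : sNorm A ((((t⁻¹ : ℝ) : ℂ)) • x) = 1 := by
      rw [sNorm_smul hsa hgg, Complex.norm_real, Real.norm_eq_abs,
        abs_of_pos (inv_pos.mpr ht)]
      exact inv_mul_cancel₀ (ne_of_gt ht)
    have hbdd : BddAbove {c | ∃ x : E, sNorm A x = 1 ∧ c = ‖sInner A (T x) x‖} := by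
      refine ⟨c, ?_⟩
      rintro r ⟨u, hu1, rfl⟩
      calc ‖sInner A (T u) u‖ ≤ sNorm A (T u) * sNorm A u := norm_sInner_le hsa hgg _ _
      _ ≤ (c * sNorm A u) * sNorm A u :=
          mul_le_mul_of_nonneg_right (hbd u) (sNorm_nonneg' A u)
      _ = c := by rw [hu1]; ring
    have hle := le_csSup hbdd ⟨_, hu, rfl⟩
    rw [map_smul, sInner_smul_smul] at hle
    have hnorm : ‖(starRingEnd ℂ) (((t⁻¹ : ℝ) : ℂ)) * ((((t⁻¹ : ℝ) : ℂ)) * sInner A (T x) x)‖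
        = t⁻¹ * (t⁻¹ * ‖sInner A (T x) x‖) := by
      rw [norm_mul, norm_mul, RCLike.norm_conj, Complex.norm_real, Real.norm_eq_abs,
        abs_of_pos (inv_pos.mpr ht)]
    rw [hnorm] at hle
    have hne : t ≠ 0 := ne_of_gt ht
    calc ‖sInner A (T x) x‖ = (t⁻¹ * (t⁻¹ * ‖sInner A (T x) x‖)) * t ^ 2 := by
          have h5 : (t⁻¹ * (t⁻¹ * ‖sInner A (T x) x‖)) * t ^ 2
              = ‖sInner A (T x) x‖ * (t⁻¹ * t) * (t⁻¹ * t) := by ring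
          rw [h5, inv_mul_cancel₀ hne, mul_one, mul_one]
    _ ≤ sSup {c | ∃ x : E, sNorm A x = 1 ∧ c = ‖sInner A (T x) x‖} * t ^ 2 :=
        mul_le_mul_of_nonneg_right hle (sq_nonneg t)
    _ = numRad A T * t ^ 2 := rfl

lemma ABounded.compAB {T S : E →L[ℂ] E} (hT : ABounded A T) (hS : ABounded A S) :
    ABounded A (T.comp S) := by
  obtain ⟨c, hc, hbd⟩ := hT
  obtain ⟨d, hd, hbd'⟩ := hS
  refine ⟨c * d, mul_pos hc hd, fun x => ?_⟩
  calc sNorm A ((T.comp S) x) = sNorm A (T (S x)) := rfl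
  _ ≤ c * sNorm A (S x) := hbd _
  _ ≤ c * (d * sNorm A x) := mul_le_mul_of_nonneg_left (hbd' x) hc.le
  _ = c * d * sNorm A x := by ring

lemma ABounded.addAB (hsa : IsSelfAdjoint g) (hgg : g.comp g = A)
    {T S : E →L[ℂ] E} (hT : ABounded A T) (hS : ABounded A S) :
    ABounded A (T + S) := by
  obtain ⟨c, hc, hbd⟩ := hT
  obtain ⟨d, hd, hbd'⟩ := hS
  refine ⟨c + d, by linarith, fun x => ?_⟩
  calc sNorm A ((T + S) x) = ‖g (T x + S x)‖ := by rw [← sNorm_eq_norm hsa hgg]; rfl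
  _ ≤ ‖g (T x)‖ + ‖g (S x)‖ := by rw [map_add]; exact norm_add_le _ _
  _ = sNorm A (T x) + sNorm A (S x) := by rw [sNorm_eq_norm hsa hgg, sNorm_eq_norm hsa hgg]
  _ ≤ c * sNorm A x + d * sNorm A x := add_le_add (hbd x) (hbd' x)
  _ = (c + d) * sNorm A x := by ring

lemma abounded_of_adjoint (hsa : IsSelfAdjoint g) (hgg : g.comp g = A)
    {X Xs : E →L[ℂ] E} (hX : ABounded A X)
    (hXs : A.comp Xs = (ContinuousLinearMap.adjoint X).comp A) : ABounded A Xs := by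
  obtain ⟨c, hc, hbd⟩ := hX
  refine ⟨c, hc, fun x => ?_⟩
  have hAXs : A (Xs x) = (ContinuousLinearMap.adjoint X) (A x) :=
    ContinuousLinearMap.ext_iff.mp hXs x
  have key : (sNorm A (Xs x)) ^ 2 ≤ sNorm A x * (c * sNorm A (Xs x)) := by
    have h1 : (sNorm A (Xs x)) ^ 2 = (sInner A (Xs x) (Xs x)).re := by
      rw [sNorm_eq_norm hsa hgg, sInner_eq_inner hsa hgg]
      exact (inner_self_re _).symm
    have h2 : sInner A (Xs x) (Xs x) = sInner A x (X (Xs x)) := by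
      rw [sInner, sInner, hAXs, ContinuousLinearMap.adjoint_inner_left]
    rw [h1, h2]
    calc (sInner A x (X (Xs x))).re ≤ ‖sInner A x (X (Xs x))‖ := cre_le_norm _
    _ ≤ sNorm A x * sNorm A (X (Xs x)) := norm_sInner_le hsa hgg _ _
    _ ≤ sNorm A x * (c * sNorm A (Xs x)) :=
        mul_le_mul_of_nonneg_left (hbd _) (sNorm_nonneg' A x)
  rcases eq_or_lt_of_le (sNorm_nonneg' A (Xs x)) with h0 | hpos
  · rw [← h0]
    exact mul_nonneg hc.le (sNorm_nonneg' A x)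
  · nlinarith [key, hpos]

/-- Buzano's inequality. -/
lemma buzano {u v e : E} (he : ‖e‖ = 1) :
    ‖(inner ℂ u e : ℂ) * inner ℂ e v‖ ≤ (‖u‖ * ‖v‖ + ‖(inner ℂ u v : ℂ)‖) / 2 := by
  set w : E := (2 * (inner ℂ e u : ℂ)) • e - u with hw
  have hsmul : ‖((2 * (inner ℂ e u : ℂ))) • e‖ ^ 2 = 4 * ‖(inner ℂ e u : ℂ)‖ ^ 2 := by
    rw [norm_smul, he, mul_one, norm_mul, RCLike.norm_ofNat]
    ring
  have hre : RCLike.re (inner ℂ ((2 * (inner ℂ e u : ℂ)) • e) u : ℂ)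
      = 2 * ‖(inner ℂ e u : ℂ)‖ ^ 2 := by
    rw [inner_smul_left, map_mul (starRingEnd ℂ), RCLike.conj_ofNat, mul_assoc,
      mul_comm ((starRingEnd ℂ) (inner ℂ e u : ℂ)), Complex.mul_conj]
    simp [Complex.normSq_eq_norm_sq, ← Complex.ofReal_pow]
  have hwsq : ‖w‖ ^ 2 = ‖u‖ ^ 2 := by
    have hns : ‖(2 * (inner ℂ e u : ℂ)) • e - u‖ ^ 2
        = ‖(2 * (inner ℂ e u : ℂ)) • e‖ ^ 2
          - 2 * RCLike.re (inner ℂ ((2 * (inner ℂ e u : ℂ)) • e) u : ℂ) + ‖u‖ ^ 2 :=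
      norm_sub_sq (𝕜 := ℂ) _ _
    rw [hw, hns, hsmul, hre]
    ring
  have hwnorm : ‖w‖ = ‖u‖ := by
    have := congrArg Real.sqrt hwsq
    simpa [Real.sqrt_sq (norm_nonneg _)] using this
  have hx : (inner ℂ w v : ℂ) = 2 * ((inner ℂ u e : ℂ) * inner ℂ e v) - inner ℂ u v := by
    rw [hw, inner_sub_left, inner_smul_left, map_mul (starRingEnd ℂ), RCLike.conj_ofNat,
      inner_conj_symm]
    ring
  have h2 : ‖(2 : ℂ) * ((inner ℂ u e : ℂ) * inner ℂ e v)‖ ≤ ‖u‖ * ‖v‖ + ‖(inner ℂ u v : ℂ)‖ := by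
    have h3 : (2 : ℂ) * ((inner ℂ u e : ℂ) * inner ℂ e v) = inner ℂ w v + inner ℂ u v := by
      rw [hx]; ring
    rw [h3]
    calc ‖(inner ℂ w v : ℂ) + inner ℂ u v‖ ≤ ‖(inner ℂ w v : ℂ)‖ + ‖(inner ℂ u v : ℂ)‖ :=
        norm_add_le _ _
    _ ≤ ‖w‖ * ‖v‖ + ‖(inner ℂ u v : ℂ)‖ := add_le_add_left (norm_inner_le_norm _ _) _
    _ = ‖u‖ * ‖v‖ + ‖(inner ℂ u v : ℂ)‖ := by rw [hwnorm]
  rw [norm_mul, RCLike.norm_ofNat] at h2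
  linarith

/-- The key inequality: the Abu-Omar–Kittaneh-type bound for a single vector. -/
lemma key_ineq (B T S : E →L[ℂ] E) (hB : B.IsPositive)
    (hadj : B.comp S = (ContinuousLinearMap.adjoint T).comp B) (z : E)
    (hz : sNorm B z = 1) :
    ‖sInner B (T z) z‖ ^ 2 ≤
      (1 / 4) * (sInner B ((S.comp T + T.comp S) z) z).re +
        (1 / 2) * ‖sInner B ((T.comp T) z) z‖ := by
  obtain ⟨g, hsa, hgg⟩ := exists_sqrtOp B hB
  have hsym := ContinuousLinearMap.isSelfAdjoint_iff_isSymmetric.mp hB.isSelfAdjoint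
  set e := g z with hedef
  set u := g (T z) with hudef
  set v := g (S z) with hvdef
  have he : ‖e‖ = 1 := by rw [← sNorm_eq_norm hsa hgg]; exact hz
  have hBS : ∀ a : E, B (S a) = (ContinuousLinearMap.adjoint T) (B a) :=
    fun a => ContinuousLinearMap.ext_iff.mp hadj a
  have h1 : sInner B (T z) z = inner ℂ u e := sInner_eq_inner hsa hgg _ _
  have h2 : sInner B (T z) z = inner ℂ e v := by
    calc sInner B (T z) z = inner ℂ (B (T z)) z := rfl
    _ = inner ℂ (T z : E) (B z) := hsym _ _
    _ = inner ℂ (z : E) ((ContinuousLinearMap.adjoint T) (B z)) := by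
        rw [ContinuousLinearMap.adjoint_inner_right]
    _ = inner ℂ (z : E) (B (S z)) := by rw [hBS]
    _ = inner ℂ (B z) (S z) := (hsym _ _).symm
    _ = inner ℂ e v := sInner_eq_inner hsa hgg z (S z)
  have hu2 : ‖u‖ ^ 2 = (sInner B ((S.comp T) z) z).re := by
    have h3 : sInner B ((S.comp T) z) z = sInner B (T z) (T z) := by
      calc sInner B ((S.comp T) z) z = inner ℂ (B (S (T z))) z := rfl
      _ = inner ℂ ((ContinuousLinearMap.adjoint T) (B (T z))) z := by rw [hBS]
      _ = inner ℂ (B (T z)) (T z) := ContinuousLinearMap.adjoint_inner_left _ _ _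
      _ = sInner B (T z) (T z) := rfl
    rw [h3, sInner_eq_inner hsa hgg, inner_self_re]
  have hv2 : ‖v‖ ^ 2 = (sInner B ((T.comp S) z) z).re := by
    have h3 : sInner B ((T.comp S) z) z = inner ℂ (B (T (S z))) z := rfl
    have h4 : (inner ℂ (B (T (S z))) z : ℂ).re = (inner ℂ (B (S z)) (S z) : ℂ).re := by
      rw [inner_re_symm']
      congr 1
      calc (inner ℂ (z : E) (B (T (S z))) : ℂ) = inner ℂ (B z) (T (S z)) := (hsym _ _).symm
      _ = inner ℂ ((ContinuousLinearMap.adjoint T) (B z)) (S z) := by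
          rw [ContinuousLinearMap.adjoint_inner_left]
      _ = inner ℂ (B (S z)) (S z) := by rw [← hBS]
    have h5 : sInner B (S z) (S z) = inner ℂ (B (S z)) (S z) := rfl
    rw [h3, h4, ← h5, sInner_eq_inner hsa hgg, inner_self_re]
  have huv : (inner ℂ u v : ℂ) = sInner B ((T.comp T) z) z := by
    calc (inner ℂ u v : ℂ) = sInner B (T z) (S z) := (sInner_eq_inner hsa hgg _ _).symm
    _ = inner ℂ (T z : E) (B (S z)) := hsym _ _
    _ = inner ℂ (T z : E) ((ContinuousLinearMap.adjoint T) (B z)) := by rw [hBS]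
    _ = inner ℂ (T (T z)) (B z) := ContinuousLinearMap.adjoint_inner_right _ _ _
    _ = inner ℂ (B (T (T z))) z := (hsym _ _).symm
    _ = sInner B ((T.comp T) z) z := rfl
  have hsq : ‖sInner B (T z) z‖ ^ 2 = ‖(inner ℂ u e : ℂ) * inner ℂ e v‖ := by
    rw [norm_mul, ← h1, ← h2, sq]
  have hbuz := buzano (u := u) (v := v) he
  have hprod : ‖u‖ * ‖v‖ ≤ (‖u‖ ^ 2 + ‖v‖ ^ 2) / 2 := by nlinarith [sq_nonneg (‖u‖ - ‖v‖)]
  have hadd : (sInner B ((S.comp T + T.comp S) z) z).re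
      = (sInner B ((S.comp T) z) z).re + (sInner B ((T.comp S) z) z).re := by
    have : sInner B ((S.comp T + T.comp S) z) z
        = sInner B ((S.comp T) z) z + sInner B ((T.comp S) z) z := by
      simp [sInner, inner_add_left]
    rw [this, Complex.add_re]
  rw [hsq]
  rw [hadd, ← hu2, ← hv2, ← huv]
  linarith

end Helpers

section Blocks

open ContinuousLinearMap

variable {H : Type*} [NormedAddCommGroup H] [InnerProductSpace ℂ H]

lemma blk_fst (T X Y S : H →L[ℂ] H) (z : WithLp 2 (H × H)) :
    (blk T X Y S z).fst = T z.fst + X z.snd := rfl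

lemma blk_snd (T X Y S : H →L[ℂ] H) (z : WithLp 2 (H × H)) :
    (blk T X Y S z).snd = Y z.fst + S z.snd := rfl

lemma blk_comp (a b c d e f g' h : H →L[ℂ] H) :
    (blk a b c d).comp (blk e f g' h) =
      blk (a.comp e + b.comp g') (a.comp f + b.comp h)
        (c.comp e + d.comp g') (c.comp f + d.comp h) := by
  ext z : 1
  have h1 : ((blk a b c d).comp (blk e f g' h) z).fst
      = (blk (a.comp e + b.comp g') (a.comp f + b.comp h)
        (c.comp e + d.comp g') (c.comp f + d.comp h) z).fst := by
    simp only [ContinuousLinearMap.comp_apply, blk_fst, blk_snd,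
      ContinuousLinearMap.add_apply, map_add]
    abel
  have h2 : ((blk a b c d).comp (blk e f g' h) z).snd
      = (blk (a.comp e + b.comp g') (a.comp f + b.comp h)
        (c.comp e + d.comp g') (c.comp f + d.comp h) z).snd := by
    simp only [ContinuousLinearMap.comp_apply, blk_fst, blk_snd,
      ContinuousLinearMap.add_apply, map_add]
    abel
  exact WithLp.ofLp_injective 2 (Prod.ext h1 h2)

lemma blk_add (a b c d e f g' h : H →L[ℂ] H) :
    blk a b c d + blk e f g' h = blk (a + e) (b + f) (c + g') (d + h) := by
  ext z : 1
  refine WithLp.ofLp_injective 2 (Prod.ext ?_ ?_)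
  all_goals simp only [WithLp.ofLp_fst, WithLp.ofLp_snd]
  · have h1 : ((blk a b c d + blk e f g' h) z).fst
        = (blk a b c d z).fst + (blk e f g' h z).fst := rfl
    rw [h1, blk_fst, blk_fst, blk_fst]
    simp only [ContinuousLinearMap.add_apply]
    abel
  · have h1 : ((blk a b c d + blk e f g' h) z).snd
        = (blk a b c d z).snd + (blk e f g' h z).snd := rfl
    rw [h1, blk_snd, blk_snd, blk_snd]
    simp only [ContinuousLinearMap.add_apply]
    abel

variable [CompleteSpace H]

lemma adjoint_zero' : ContinuousLinearMap.adjoint (0 : H →L[ℂ] H) = 0 := map_zero _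

lemma adjoint_blk (T X Y S : H →L[ℂ] H) :
    ContinuousLinearMap.adjoint (blk T X Y S) =
      blk (ContinuousLinearMap.adjoint T) (ContinuousLinearMap.adjoint Y)
        (ContinuousLinearMap.adjoint X) (ContinuousLinearMap.adjoint S) := by
  symm
  rw [ContinuousLinearMap.eq_adjoint_iff]
  intro z w
  rw [WithLp.prod_inner_apply, WithLp.prod_inner_apply]
  simp only [WithLp.ofLp_fst, WithLp.ofLp_snd, blk_fst, blk_snd, inner_add_left, inner_add_right,
    ContinuousLinearMap.adjoint_inner_left]
  ring

lemma sInner_twoA (A : H →L[ℂ] H) (z w : WithLp 2 (H × H)) :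
    sInner (twoA A) z w = sInner A z.fst w.fst + sInner A z.snd w.snd := by
  rw [sInner, twoA, WithLp.prod_inner_apply, WithLp.ofLp_fst, WithLp.ofLp_snd, blk_fst, blk_snd]
  simp [sInner]

lemma twoA_isPositive {A : H →L[ℂ] H} (hA : A.IsPositive) : (twoA A).IsPositive := by
  rw [ContinuousLinearMap.isPositive_iff_complex]
  intro z
  have hz : (inner ℂ (twoA A z) z : ℂ) = inner ℂ (A z.fst) z.fst + inner ℂ (A z.snd) z.snd := by
    rw [WithLp.prod_inner_apply]
    simp [twoA, blk_fst, blk_snd]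
  have h1 := (ContinuousLinearMap.isPositive_iff_complex A).mp hA z.fst
  have h2 := (ContinuousLinearMap.isPositive_iff_complex A).mp hA z.snd
  constructor
  · rw [hz, map_add]
    push_cast
    rw [h1.1, h2.1]
  · rw [hz, map_add]
    exact add_nonneg h1.2 h2.2

end Blocks

theorem stmt1 {H : Type*} [NormedAddCommGroup H] [InnerProductSpace ℂ H] [CompleteSpace H]
    (A : H →L[ℂ] H) (hA : A.IsPositive)
    (X Y Xs Ys : H →L[ℂ] H) (hX : ABounded A X) (hY : ABounded A Y)
    (hXs : A.comp Xs = (ContinuousLinearMap.adjoint X).comp A)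
    (hYs : A.comp Ys = (ContinuousLinearMap.adjoint Y).comp A) :
    (numRad (twoA A) (blk 0 X Y 0)) ^ 2 ≤
      (1 / 4) * max (opSNorm A (Xs.comp X + Y.comp Ys)) (opSNorm A (X.comp Xs + Ys.comp Y)) +
        (1 / 2) * max (numRad A (X.comp Y)) (numRad A (Y.comp X)) := by
  obtain ⟨g, hsa, hgg⟩ := exists_sqrtOp A hA
  set T := blk 0 X Y 0 with hTdef
  set S := blk 0 Ys Xs 0 with hSdef
  have h𝔸 : (twoA A).IsPositive := twoA_isPositive hA
  -- the adjoint relation at the block level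
  have hadj : (twoA A).comp S = (ContinuousLinearMap.adjoint T).comp (twoA A) := by
    rw [hTdef, hSdef, twoA, adjoint_blk, blk_comp, blk_comp]
    simp only [ContinuousLinearMap.comp_zero, ContinuousLinearMap.zero_comp,
      adjoint_zero', add_zero, zero_add]
    rw [hXs, hYs]
  -- boundedness facts
  have hXsb : ABounded A Xs := abounded_of_adjoint hsa hgg hX hXs
  have hYsb : ABounded A Ys := abounded_of_adjoint hsa hgg hY hYs
  have hQ : ABounded A (Xs.comp X + Y.comp Ys) :=
    ABounded.addAB hsa hgg (hXsb.compAB hX) (hY.compAB hYsb)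
  have hP : ABounded A (X.comp Xs + Ys.comp Y) :=
    ABounded.addAB hsa hgg (hX.compAB hXsb) (hYsb.compAB hY)
  have hXY : ABounded A (X.comp Y) := hX.compAB hY
  have hYX : ABounded A (Y.comp X) := hY.compAB hX
  -- block computations
  have hST : S.comp T + T.comp S =
      blk (X.comp Xs + Ys.comp Y) 0 0 (Xs.comp X + Y.comp Ys) := by
    rw [hTdef, hSdef, blk_comp, blk_comp, blk_add]
    simp only [ContinuousLinearMap.comp_zero, ContinuousLinearMap.zero_comp,
      add_zero, zero_add]
    rw [add_comm (Ys.comp Y) (X.comp Xs)]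
  have hTT : T.comp T = blk (X.comp Y) 0 0 (Y.comp X) := by
    rw [hTdef, blk_comp]
    simp only [ContinuousLinearMap.comp_zero, ContinuousLinearMap.zero_comp,
      add_zero, zero_add]
  set M : ℝ :=
    (1 / 4) * max (opSNorm A (Xs.comp X + Y.comp Ys)) (opSNorm A (X.comp Xs + Ys.comp Y)) +
      (1 / 2) * max (numRad A (X.comp Y)) (numRad A (Y.comp X)) with hMdef
  have hM0 : 0 ≤ M := by
    have h1 : 0 ≤ max (opSNorm A (Xs.comp X + Y.comp Ys)) (opSNorm A (X.comp Xs + Ys.comp Y)) :=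
      le_trans (opSNorm_nonneg A _) (le_max_left _ _)
    have h2 : 0 ≤ max (numRad A (X.comp Y)) (numRad A (Y.comp X)) :=
      le_trans (numRad_nonneg A _) (le_max_left _ _)
    rw [hMdef]; positivity
  have hmain : ∀ c ∈ {c | ∃ z : WithLp 2 (H × H),
      sNorm (twoA A) z = 1 ∧ c = ‖sInner (twoA A) (T z) z‖}, c ≤ Real.sqrt M := by
    rintro c ⟨z, hz, rfl⟩
    apply Real.le_sqrt_of_sq_le
    -- the normalization
    have hre : 0 ≤ (sInner A z.fst z.fst).re := by
      rw [sInner_eq_inner hsa hgg, inner_self_re]; positivity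
    have hre' : 0 ≤ (sInner A z.snd z.snd).re := by
      rw [sInner_eq_inner hsa hgg, inner_self_re]; positivity
    have hz1 : (sNorm A z.fst) ^ 2 + (sNorm A z.snd) ^ 2 = 1 := by
      have h := hz
      rw [sNorm, Real.sqrt_eq_one] at h
      rw [sInner_twoA, Complex.add_re] at h
      rw [sNorm, sNorm, Real.sq_sqrt hre, Real.sq_sqrt hre']
      exact h
    set px := (sNorm A z.fst) ^ 2 with hpx
    set py := (sNorm A z.snd) ^ 2 with hpy
    have hpx0 : 0 ≤ px := sq_nonneg _
    have hpy0 : 0 ≤ py := sq_nonneg _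
    -- key inequality
    have hkey := key_ineq (twoA A) T S h𝔸 hadj z hz
    -- bound the first term
    have hterm1 : (sInner (twoA A) ((S.comp T + T.comp S) z) z).re ≤
        max (opSNorm A (Xs.comp X + Y.comp Ys)) (opSNorm A (X.comp Xs + Ys.comp Y)) := by
      rw [hST, sInner_twoA, Complex.add_re, blk_fst, blk_snd]
      simp only [ContinuousLinearMap.zero_apply, add_zero, zero_add]
      set mx := max (opSNorm A (Xs.comp X + Y.comp Ys)) (opSNorm A (X.comp Xs + Ys.comp Y))
        with hmx
      have b1 : (sInner A ((X.comp Xs + Ys.comp Y) z.fst) z.fst).re ≤ mx * px := by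
        calc (sInner A ((X.comp Xs + Ys.comp Y) z.fst) z.fst).re
            ≤ ‖sInner A ((X.comp Xs + Ys.comp Y) z.fst) z.fst‖ := cre_le_norm _
        _ ≤ sNorm A ((X.comp Xs + Ys.comp Y) z.fst) * sNorm A z.fst :=
            norm_sInner_le hsa hgg _ _
        _ ≤ (opSNorm A (X.comp Xs + Ys.comp Y) * sNorm A z.fst) * sNorm A z.fst :=
            mul_le_mul_of_nonneg_right (apply_le_opSNorm hsa hgg hP _) (sNorm_nonneg' A _)
        _ = opSNorm A (X.comp Xs + Ys.comp Y) * px := by rw [hpx]; ring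
        _ ≤ mx * px := mul_le_mul_of_nonneg_right (le_max_right _ _) hpx0
      have b2 : (sInner A ((Xs.comp X + Y.comp Ys) z.snd) z.snd).re ≤ mx * py := by
        calc (sInner A ((Xs.comp X + Y.comp Ys) z.snd) z.snd).re
            ≤ ‖sInner A ((Xs.comp X + Y.comp Ys) z.snd) z.snd‖ := cre_le_norm _
        _ ≤ sNorm A ((Xs.comp X + Y.comp Ys) z.snd) * sNorm A z.snd :=
            norm_sInner_le hsa hgg _ _
        _ ≤ (opSNorm A (Xs.comp X + Y.comp Ys) * sNorm A z.snd) * sNorm A z.snd :=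
            mul_le_mul_of_nonneg_right (apply_le_opSNorm hsa hgg hQ _) (sNorm_nonneg' A _)
        _ = opSNorm A (Xs.comp X + Y.comp Ys) * py := by rw [hpy]; ring
        _ ≤ mx * py := mul_le_mul_of_nonneg_right (le_max_left _ _) hpy0
      have : mx * px + mx * py = mx := by
        rw [← mul_add, hz1, mul_one]
      linarith
    -- bound the second term
    have hterm2 : ‖sInner (twoA A) ((T.comp T) z) z‖ ≤
        max (numRad A (X.comp Y)) (numRad A (Y.comp X)) := by
      rw [hTT, sInner_twoA, blk_fst, blk_snd]
      simp only [ContinuousLinearMap.zero_apply, add_zero, zero_add]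
      set mw := max (numRad A (X.comp Y)) (numRad A (Y.comp X)) with hmw
      have b1 : ‖sInner A ((X.comp Y) z.fst) z.fst‖ ≤ mw * px := by
        calc ‖sInner A ((X.comp Y) z.fst) z.fst‖ ≤ numRad A (X.comp Y) * px :=
            sInner_apply_le_numRad hsa hgg hXY _
        _ ≤ mw * px := mul_le_mul_of_nonneg_right (le_max_left _ _) hpx0
      have b2 : ‖sInner A ((Y.comp X) z.snd) z.snd‖ ≤ mw * py := by
        calc ‖sInner A ((Y.comp X) z.snd) z.snd‖ ≤ numRad A (Y.comp X) * py :=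
            sInner_apply_le_numRad hsa hgg hYX _
        _ ≤ mw * py := mul_le_mul_of_nonneg_right (le_max_right _ _) hpy0
      have hmxpy : mw * px + mw * py = mw := by rw [← mul_add, hz1, mul_one]
      calc ‖sInner A ((X.comp Y) z.fst) z.fst + sInner A ((Y.comp X) z.snd) z.snd‖
          ≤ ‖sInner A ((X.comp Y) z.fst) z.fst‖ + ‖sInner A ((Y.comp X) z.snd) z.snd‖ :=
          norm_add_le _ _
      _ ≤ mw * px + mw * py := add_le_add b1 b2
      _ = mw := hmxpy
    rw [hMdef]
    calc ‖sInner (twoA A) (T z) z‖ ^ 2 ≤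
        (1 / 4) * (sInner (twoA A) ((S.comp T + T.comp S) z) z).re +
          (1 / 2) * ‖sInner (twoA A) ((T.comp T) z) z‖ := hkey
    _ ≤ (1 / 4) * max (opSNorm A (Xs.comp X + Y.comp Ys)) (opSNorm A (X.comp Xs + Ys.comp Y)) +
          (1 / 2) * max (numRad A (X.comp Y)) (numRad A (Y.comp X)) := by
        have := hterm1; have := hterm2; linarith
  have hfin : numRad (twoA A) T ≤ Real.sqrt M :=
    Real.sSup_le hmain (Real.sqrt_nonneg M)
  have h2 : (numRad (twoA A) T) ^ 2 ≤ (Real.sqrt M) ^ 2 :=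
    pow_le_pow_left₀ (numRad_nonneg _ _) hfin 2
  rw [Real.sq_sqrt hM0] at h2
  exact h2
end

section
/- Let X be an A-bounded operator on H admitting an A-adjoint Xs (i.e. A∘Xs = X*∘A). Then w_A(X) ≤ (1/2)·√(‖Xs∘X + X∘Xs‖_A + 2·w_A(X²)). -/
open scoped InnerProductSpace

open scoped InnerProductSpace

lemma buzano_s4 {E : Type*} [NormedAddCommGroup E] [InnerProductSpace ℂ E]
    (e a b : E) (he : ‖e‖ = 1) :
    ‖⟪a, e⟫_ℂ‖ * ‖⟪e, b⟫_ℂ‖ ≤ (‖a‖ * ‖b‖ + ‖⟪a, b⟫_ℂ‖) / 2 := by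
  set r : E := ((2:ℂ) * ⟪e, b⟫_ℂ) • e - b with hr
  have hee : (⟪e, e⟫_ℂ) = 1 := by
    rw [inner_self_eq_norm_sq_to_K, he]; norm_num
  have h1 : (⟪r, r⟫_ℂ) = ⟪b, b⟫_ℂ := by
    simp only [hr, inner_sub_left, inner_sub_right, inner_smul_left, inner_smul_right,
      hee, map_mul, inner_conj_symm, mul_one]
    rw [show (starRingEnd ℂ) 2 = 2 from by norm_num [starRingEnd_apply, star_ofNat]]
    ring
  have hnorm_r : ‖r‖ = ‖b‖ := by
    rw [norm_eq_sqrt_re_inner (𝕜 := ℂ) r, norm_eq_sqrt_re_inner (𝕜 := ℂ) b, h1]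
  have hip : (⟪a, r⟫_ℂ) = 2 * ⟪e, b⟫_ℂ * ⟪a, e⟫_ℂ - ⟪a, b⟫_ℂ := by
    simp only [hr, inner_sub_right, inner_smul_right]; try ring
  have h2 : ‖(2:ℂ) * ⟪e, b⟫_ℂ * ⟪a, e⟫_ℂ‖ - ‖(⟪a, b⟫_ℂ)‖ ≤ ‖a‖ * ‖b‖ := by
    calc ‖(2:ℂ) * ⟪e, b⟫_ℂ * ⟪a, e⟫_ℂ‖ - ‖(⟪a, b⟫_ℂ)‖
        ≤ ‖2 * ⟪e, b⟫_ℂ * ⟪a, e⟫_ℂ - ⟪a, b⟫_ℂ‖ := norm_sub_norm_le _ _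
      _ = ‖(⟪a, r⟫_ℂ)‖ := by rw [hip]
      _ ≤ ‖a‖ * ‖r‖ := norm_inner_le_norm a r
      _ = ‖a‖ * ‖b‖ := by rw [hnorm_r]
  have h3 : ‖(2:ℂ) * ⟪e, b⟫_ℂ * ⟪a, e⟫_ℂ‖ = 2 * (‖⟪a, e⟫_ℂ‖ * ‖⟪e, b⟫_ℂ‖) := by
    simp [norm_mul]; ring
  linarith

set_option maxHeartbeats 1000000 in
set_option synthInstance.maxHeartbeats 1000000 in
theorem stmt4 {H : Type*} [NormedAddCommGroup H] [InnerProductSpace ℂ H] [CompleteSpace H]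
    (A : H →L[ℂ] H) (hA : A.IsPositive)
    (X Xs : H →L[ℂ] H) (hX : ABounded A X)
    (hXs : A.comp Xs = (ContinuousLinearMap.adjoint X).comp A) :
    numRad A X ≤
      (1 / 2) * Real.sqrt (opSNorm A (Xs.comp X + X.comp Xs) + 2 * numRad A (X.comp X)) := by
  obtain ⟨c, hc0, hcb⟩ := hX
  have h0 : (0:H →L[ℂ] H) ≤ A := (ContinuousLinearMap.nonneg_iff_isPositive A).mpr hA
  set B := CFC.sqrt A with hBdef
  have hB0 : (0:H →L[ℂ] H) ≤ B := CFC.sqrt_nonneg A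
  have hBsa : IsSelfAdjoint B := IsSelfAdjoint.of_nonneg hB0
  have hBadj : ContinuousLinearMap.adjoint B = B := by
    rw [← ContinuousLinearMap.star_eq_adjoint]; exact hBsa
  have hB2 : ∀ u : H, B (B u) = A u := by
    intro u
    have h2 : B ^ 2 = A := CFC.sq_sqrt A h0
    calc B (B u) = (B ^ 2) u := by rw [sq]; rfl
      _ = A u := by rw [h2]
  have hBsym : ∀ u v : H, ⟪B u, v⟫_ℂ = ⟪u, B v⟫_ℂ := by
    intro u v
    conv_lhs => rw [← hBadj]
    exact ContinuousLinearMap.adjoint_inner_left B v u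
  have hAadj : ContinuousLinearMap.adjoint A = A := by
    rw [← ContinuousLinearMap.star_eq_adjoint]; exact hA.isSelfAdjoint
  have hAsym : ∀ u v : H, ⟪A u, v⟫_ℂ = ⟪u, A v⟫_ℂ := by
    intro u v
    conv_lhs => rw [← hAadj]
    exact ContinuousLinearMap.adjoint_inner_left A v u
  have hXsA : ∀ u : H, A (Xs u) = (ContinuousLinearMap.adjoint X) (A u) := by
    intro u
    exact ContinuousLinearMap.ext_iff.mp hXs u
  -- sInner/sNorm in terms of B
  have hsi : ∀ u v : H, sInner A u v = ⟪B u, B v⟫_ℂ := by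
    intro u v
    rw [sInner, ← hB2 u, hBsym]
  have hre : ∀ u : H, (⟪B u, B u⟫_ℂ).re = ‖B u‖ ^ 2 := by
    intro u
    rw [inner_self_eq_norm_sq_to_K]
    norm_cast
  have hsn : ∀ u : H, sNorm A u = ‖B u‖ := by
    intro u
    rw [sNorm, hsi, hre]
    exact Real.sqrt_sq (norm_nonneg _)
  -- A-boundedness of X and Xs in terms of B
  have hXb : ∀ u : H, ‖B (X u)‖ ≤ c * ‖B u‖ := by
    intro u; have := hcb u; rwa [hsn, hsn] at this
  have hXsb : ∀ u : H, ‖B (Xs u)‖ ≤ c * ‖B u‖ := by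
    intro u
    have hsq : ‖B (Xs u)‖ ^ 2 ≤ ‖B u‖ * (c * ‖B (Xs u)‖) := by
      have e2 : ⟪B (Xs u), B (Xs u)⟫_ℂ = ⟪B u, B (X (Xs u))⟫_ℂ := by
        calc ⟪B (Xs u), B (Xs u)⟫_ℂ = sInner A (Xs u) (Xs u) := (hsi _ _).symm
          _ = ⟪A (Xs u), Xs u⟫_ℂ := rfl
          _ = ⟪(ContinuousLinearMap.adjoint X) (A u), Xs u⟫_ℂ := by rw [hXsA]
          _ = ⟪A u, X (Xs u)⟫_ℂ := ContinuousLinearMap.adjoint_inner_left X (Xs u) (A u)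
          _ = sInner A u (X (Xs u)) := rfl
          _ = ⟪B u, B (X (Xs u))⟫_ℂ := hsi _ _
      calc ‖B (Xs u)‖ ^ 2 = (⟪B (Xs u), B (Xs u)⟫_ℂ).re := (hre _).symm
        _ = (⟪B u, B (X (Xs u))⟫_ℂ).re := by rw [e2]
        _ ≤ ‖(⟪B u, B (X (Xs u))⟫_ℂ)‖ := Complex.re_le_norm _
        _ ≤ ‖B u‖ * ‖B (X (Xs u))‖ := norm_inner_le_norm _ _
        _ ≤ ‖B u‖ * (c * ‖B (Xs u)‖) :=
            mul_le_mul_of_nonneg_left (hXb (Xs u)) (norm_nonneg _)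
    rcases eq_or_lt_of_le (norm_nonneg (B (Xs u))) with h | h
    · rw [← h]; positivity
    · nlinarith [norm_nonneg (B u)]
  -- boundedness of the relevant sets
  set S := Xs.comp X + X.comp Xs with hSdef
  have hSapp : ∀ u : H, S u = Xs (X u) + X (Xs u) := fun u => rfl
  have hbdd1 : BddAbove {d | ∃ x : H, sNorm A x = 1 ∧ d = sNorm A (S x)} := by
    refine ⟨2 * (c * c), ?_⟩
    rintro d ⟨x, hx1, rfl⟩
    have hx1' : ‖B x‖ = 1 := by rwa [hsn] at hx1
    rw [hsn, hSapp, map_add]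
    calc ‖B (Xs (X x)) + B (X (Xs x))‖ ≤ ‖B (Xs (X x))‖ + ‖B (X (Xs x))‖ := norm_add_le _ _
      _ ≤ c * ‖B (X x)‖ + c * ‖B (Xs x)‖ := add_le_add (hXsb _) (hXb _)
      _ ≤ c * (c * ‖B x‖) + c * (c * ‖B x‖) :=
          add_le_add (mul_le_mul_of_nonneg_left (hXb x) hc0.le)
            (mul_le_mul_of_nonneg_left (hXsb x) hc0.le)
      _ = 2 * (c * c) := by rw [hx1']; ring
  have hbdd2 : BddAbove {d | ∃ x : H, sNorm A x = 1 ∧ d = ‖sInner A ((X.comp X) x) x‖} := by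
    refine ⟨c * c, ?_⟩
    rintro d ⟨x, hx1, rfl⟩
    have hx1' : ‖B x‖ = 1 := by rwa [hsn] at hx1
    rw [hsi]
    calc ‖(⟪B ((X.comp X) x), B x⟫_ℂ)‖ ≤ ‖B (X (X x))‖ * ‖B x‖ := norm_inner_le_norm _ _
      _ ≤ (c * (c * ‖B x‖)) * ‖B x‖ :=
          mul_le_mul_of_nonneg_right
            ((hXb (X x)).trans (mul_le_mul_of_nonneg_left (hXb x) hc0.le)) (norm_nonneg _)
      _ = c * c := by rw [hx1']; ring
  -- main estimate
  apply Real.sSup_le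
  · rintro d ⟨x, hx1, rfl⟩
    have hx1' : ‖B x‖ = 1 := by rwa [hsn] at hx1
    set M := opSNorm A S + 2 * numRad A (X.comp X) with hM
    -- key inner product identities
    have key2 : ⟪B x, B (Xs x)⟫_ℂ = sInner A (X x) x := by
      calc ⟪B x, B (Xs x)⟫_ℂ = sInner A x (Xs x) := (hsi _ _).symm
        _ = ⟪A x, Xs x⟫_ℂ := rfl
        _ = ⟪x, A (Xs x)⟫_ℂ := hAsym x (Xs x)
        _ = ⟪x, (ContinuousLinearMap.adjoint X) (A x)⟫_ℂ := by rw [hXsA]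
        _ = ⟪X x, A x⟫_ℂ := ContinuousLinearMap.adjoint_inner_right X x (A x)
        _ = ⟪A (X x), x⟫_ℂ := (hAsym (X x) x).symm
        _ = sInner A (X x) x := rfl
    have key3 : ⟪B (X x), B (Xs x)⟫_ℂ = sInner A ((X.comp X) x) x := by
      calc ⟪B (X x), B (Xs x)⟫_ℂ = sInner A (X x) (Xs x) := (hsi _ _).symm
        _ = ⟪A (X x), Xs x⟫_ℂ := rfl
        _ = ⟪X x, A (Xs x)⟫_ℂ := hAsym (X x) (Xs x)
        _ = ⟪X x, (ContinuousLinearMap.adjoint X) (A x)⟫_ℂ := by rw [hXsA]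
        _ = ⟪X (X x), A x⟫_ℂ := ContinuousLinearMap.adjoint_inner_right X (X x) (A x)
        _ = ⟪A (X (X x)), x⟫_ℂ := (hAsym (X (X x)) x).symm
        _ = sInner A ((X.comp X) x) x := rfl
    -- Buzano with e = B x, a = B (X x), b = B (Xs x)
    have hbuz := buzano_s4 (B x) (B (X x)) (B (Xs x)) hx1'
    have key1 : ⟪B (X x), B x⟫_ℂ = sInner A (X x) x := (hsi (X x) x).symm
    rw [key1, key2, key3] at hbuz
    -- the parallelogram-type bound
    have d1 : sInner A (Xs (X x)) x = ⟪B (X x), B (X x)⟫_ℂ := by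
      calc sInner A (Xs (X x)) x = ⟪A (Xs (X x)), x⟫_ℂ := rfl
        _ = ⟪(ContinuousLinearMap.adjoint X) (A (X x)), x⟫_ℂ := by rw [hXsA]
        _ = ⟪A (X x), X x⟫_ℂ := ContinuousLinearMap.adjoint_inner_left X x (A (X x))
        _ = sInner A (X x) (X x) := rfl
        _ = ⟪B (X x), B (X x)⟫_ℂ := hsi _ _
    have d2 : sInner A (X (Xs x)) x = ⟪B (Xs x), B (Xs x)⟫_ℂ := by
      calc sInner A (X (Xs x)) x = ⟪A (X (Xs x)), x⟫_ℂ := rfl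
        _ = ⟪X (Xs x), A x⟫_ℂ := hAsym (X (Xs x)) x
        _ = ⟪Xs x, (ContinuousLinearMap.adjoint X) (A x)⟫_ℂ :=
            (ContinuousLinearMap.adjoint_inner_right X (Xs x) (A x)).symm
        _ = ⟪Xs x, A (Xs x)⟫_ℂ := by rw [← hXsA]
        _ = ⟪Xs x, B (B (Xs x))⟫_ℂ := by rw [hB2]
        _ = ⟪B (Xs x), B (Xs x)⟫_ℂ := (hBsym (Xs x) (B (Xs x))).symm
    have e1 : (sInner A (S x) x).re = ‖B (X x)‖ ^ 2 + ‖B (Xs x)‖ ^ 2 := by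
      have hsum : sInner A (S x) x = ⟪B (X x), B (X x)⟫_ℂ + ⟪B (Xs x), B (Xs x)⟫_ℂ := by
        rw [← d1, ← d2, sInner, sInner, sInner, hSapp, map_add, inner_add_left]
      rw [hsum, Complex.add_re, hre, hre]
    -- bounds via suprema
    have hop : (sInner A (S x) x).re ≤ opSNorm A S := by
      calc (sInner A (S x) x).re ≤ ‖sInner A (S x) x‖ := Complex.re_le_norm _
        _ ≤ ‖B (S x)‖ * ‖B x‖ := by rw [hsi]; exact norm_inner_le_norm _ _
        _ = sNorm A (S x) := by rw [hx1', mul_one, hsn]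
        _ ≤ opSNorm A S := le_csSup hbdd1 ⟨x, hx1, rfl⟩
    have hnr : ‖sInner A ((X.comp X) x) x‖ ≤ numRad A (X.comp X) :=
      le_csSup hbdd2 ⟨x, hx1, rfl⟩
    have hab : 2 * (‖B (X x)‖ * ‖B (Xs x)‖) ≤ (sInner A (S x) x).re := by
      nlinarith [sq_nonneg (‖B (X x)‖ - ‖B (Xs x)‖)]
    -- combine
    have hq : ‖sInner A (X x) x‖ * ‖sInner A (X x) x‖ ≤ M / 4 := by
      rw [hM]; linarith
    have h4 : Real.sqrt (‖sInner A (X x) x‖ * ‖sInner A (X x) x‖) ≤ Real.sqrt (M / 4) :=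
      Real.sqrt_le_sqrt hq
    rw [Real.sqrt_mul_self (norm_nonneg _)] at h4
    have hsqrt : Real.sqrt (M / 4) = (1 / 2) * Real.sqrt M := by
      rw [show M / 4 = (1/4) * M by ring, Real.sqrt_mul (by norm_num) M,
        show Real.sqrt (1/4) = 1/2 from by
          rw [show (1/4:ℝ) = (1/2)^2 by norm_num, Real.sqrt_sq (by norm_num)]]
    rw [hsqrt] at h4
    exact h4
  · positivity
end
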